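/- For the implicit discretization z^{k+1} = z^k + ε(J∇H(z^{k+1}) + z⋆ − z^{k+1}) with step ε > 0, one has H(z^{k+1}) − H(z^k) ≤ −ε·H(z^{k+1}), and hence H(z^k) ≤ (1+ε)^{−k}·H(z^0) for all k. -/

import Mathlib

open RealInnerProductSpace

/-- The standard symplectic matrix `J` on `ℝ^{2n}`: `J (x, p) = (p, -x)`. -/
def Jmap (n : ℕ) (v : EuclideanSpace ℝ (Fin n ⊕ Fin n)) :
    EuclideanSpace ℝ (Fin n ⊕ Fin n) :=
  WithLp.toLp 2 (fun i => Sum.elim (fun a => v (Sum.inr a)) (fun a => -(v (Sum.inl a))) i)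

lemma inner_Jmap_self (n : ℕ) (v : EuclideanSpace ℝ (Fin n ⊕ Fin n)) :
    ⟪v, Jmap n v⟫ = 0 := by
  simp only [PiLp.inner_apply, Jmap, RCLike.inner_apply, starRingEnd_apply, star_trivial]
  rw [Fintype.sum_sum_type]
  simp [mul_comm]

/-- First-order condition for convex differentiable functions. -/
lemma grad_ineq {E : Type*} [NormedAddCommGroup E] [InnerProductSpace ℝ E] [CompleteSpace E]
    {H : E → ℝ} (hconv : ConvexOn ℝ Set.univ H) {g x : E}
    (hg : HasGradientAt H g x) (y : E) :
    H x + ⟪g, y - x⟫ ≤ H y := by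
  set φ : ℝ → ℝ := fun t => H (x + t • (y - x)) with hφ
  have hφconv : ConvexOn ℝ Set.univ φ := by
    have := hconv.comp_affineMap (AffineMap.lineMap x y)
    have heq : φ = H ∘ (AffineMap.lineMap x y : ℝ →ᵃ[ℝ] E) := by
      funext t
      simp [φ, AffineMap.lineMap_apply, add_comm]
    rw [heq]
    refine this.subset (fun t _ => ?_) convex_univ
    simp
  have hder : HasDerivAt φ ⟪g, y - x⟫ 0 := by
    have h1 : HasDerivAt (fun t : ℝ => x + t • (y - x)) (y - x) 0 := by
      simpa using ((hasDerivAt_id (0:ℝ)).smul_const (y - x)).const_add x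
    have hx0 : x + (0:ℝ) • (y - x) = x := by simp
    have h2 := (hx0 ▸ hg.hasFDerivAt).comp_hasDerivAt 0 h1
    simp at h2; exact h2
  have hslope := hφconv.le_slope_of_hasDerivWithinAt (Set.mem_univ (0:ℝ))
    (Set.mem_univ (1:ℝ)) one_pos (hder.hasDerivWithinAt)
  rw [slope_def_field] at hslope
  simp only [φ, zero_smul, add_zero, one_smul, div_one] at hslope
  simp only [φ, one_smul, zero_smul, add_zero, sub_zero, div_one, add_sub_cancel] at hslope
  linarith

/-- For the implicit discretization
`z^{k+1} = z^k + ε(J∇H(z^{k+1}) + z⋆ − z^{k+1})` with step `ε > 0`, one has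
`H(z^{k+1}) − H(z^k) ≤ −ε·H(z^{k+1})`, and hence
`H(z^k) ≤ (1+ε)^{−k}·H(z^0)` for all `k`. -/
theorem stmt7 (n : ℕ)
    (H : EuclideanSpace ℝ (Fin n ⊕ Fin n) → ℝ)
    (hconv : ConvexOn ℝ Set.univ H)
    (hH : ∀ w, HasGradientAt H (gradient H w) w)
    (zstar : EuclideanSpace ℝ (Fin n ⊕ Fin n))
    (hmin : H zstar = 0) (hnonneg : ∀ w, 0 ≤ H w)
    (ε : ℝ) (hε : 0 < ε)
    (z : ℕ → EuclideanSpace ℝ (Fin n ⊕ Fin n))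
    (hrec : ∀ k, z (k + 1) =
      z k + ε • (Jmap n (gradient H (z (k + 1))) + zstar - z (k + 1))) :
    (∀ k, H (z (k + 1)) - H (z k) ≤ -ε * H (z (k + 1))) ∧
      ∀ k, H (z k) ≤ (1 + ε)⁻¹ ^ k * H (z 0) := by
  have key : ∀ k, H (z (k + 1)) - H (z k) ≤ -ε * H (z (k + 1)) := by
    intro k
    set g := gradient H (z (k + 1)) with hg
    have h1 : H (z (k + 1)) + ⟪g, z k - z (k + 1)⟫ ≤ H (z k) :=
      grad_ineq hconv (hH (z (k + 1))) (z k)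
    have h2 : H (z (k + 1)) + ⟪g, zstar - z (k + 1)⟫ ≤ H zstar :=
      grad_ineq hconv (hH (z (k + 1))) zstar
    have hdiff : z k - z (k + 1) = -(ε • (Jmap n g + zstar - z (k + 1))) := by
      nth_rewrite 1 [hrec k]; abel
    have hinner : ⟪g, z k - z (k + 1)⟫ =
        -(ε * (⟪g, Jmap n g⟫ + ⟪g, zstar - z (k+1)⟫)) := by
      rw [hdiff, inner_neg_right, real_inner_smul_right]
      congr 1
      rw [show Jmap n g + zstar - z (k+1) = Jmap n g + (zstar - z (k+1)) by abel,
        inner_add_right]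
    rw [inner_Jmap_self, zero_add] at hinner
    have h3 : ⟪g, zstar - z (k + 1)⟫ ≤ -H (z (k + 1)) := by
      rw [hmin] at h2; linarith
    rw [hinner] at h1
    nlinarith
  refine ⟨key, ?_⟩
  intro k
  induction k with
  | zero => simp
  | succ k ih =>
    have hk := key k
    have hpos : (0:ℝ) < 1 + ε := by linarith
    have hstep : H (z (k + 1)) ≤ (1 + ε)⁻¹ * H (z k) := by
      rw [inv_mul_eq_div, le_div_iff₀ hpos]
      nlinarith
    calc H (z (k + 1)) ≤ (1 + ε)⁻¹ * H (z k) := hstep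
      _ ≤ (1 + ε)⁻¹ * ((1 + ε)⁻¹ ^ k * H (z 0)) := by
          apply mul_le_mul_of_nonneg_left ih (by positivity)
      _ = (1 + ε)⁻¹ ^ (k + 1) * H (z 0) := by ring
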